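/- arXiv:2108.04168 — 11 statements merged into one kernel-verified Lean document; each statement's English description precedes it below -/
import Mathlib

section
/- Let (A,B) be a generic pair of flags in an m-dimensional R-vector space V over a skew field R, and let a,b ≥ 1 be integers with a+b = m+1. Then the two maps from A^{a-1} ∩ B^{b-1} to gr^a A = A^{a-1}/A^a and to gr^b B = B^{b-1}/B^b, each given by the inclusion into A^{a-1} (respectively B^{b-1}) followed by the quotient projection, are isomorphisms of left R-modules; in particular A^{a-1} ∩ B^{b-1} is an R-line. -/
section Aux
variable {R V : Type*} [DivisionRing R] [AddCommGroup V] [Module R V]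

lemma gen_inf_sup {p q : Submodule R V}
    (h : Function.Bijective ⇑(LinearMap.prod p.mkQ q.mkQ)) :
    p ⊓ q = ⊥ ∧ p ⊔ q = ⊤ := by
  constructor
  · have := LinearMap.ker_eq_bot.mpr h.1
    rwa [LinearMap.ker_prod, Submodule.ker_mkQ, Submodule.ker_mkQ] at this
  · rw [eq_top_iff]
    intro v _
    obtain ⟨w, hw⟩ := h.2 (p.mkQ v, 0)
    have hw1 : p.mkQ w = p.mkQ v := congrArg Prod.fst hw
    have hw2 : q.mkQ w = 0 := congrArg Prod.snd hw
    have hwq : w ∈ q := by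
      rwa [Submodule.mkQ_apply, Submodule.Quotient.mk_eq_zero] at hw2
    have hvp : v - w ∈ p := by
      rw [Submodule.mkQ_apply, Submodule.mkQ_apply] at hw1
      exact (Submodule.Quotient.eq p).mp hw1.symm
    have : v = (v - w) + w := by abel
    rw [this]
    exact Submodule.add_mem_sup hvp hwq

lemma aux_bij {p p' q S : Submodule R V} (hS : S = p ⊓ q) (hle : S ≤ p) (hpp' : p' ≤ p)
    (hinf : p' ⊓ q = ⊥) (hsup : p' ⊔ q = ⊤) :
    Function.Bijective
      ⇑((Submodule.comap p.subtype p').mkQ ∘ₗ Submodule.inclusion hle) := by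
  subst hS
  constructor
  · intro x y hxy
    rw [LinearMap.comp_apply, LinearMap.comp_apply, Submodule.mkQ_apply, Submodule.mkQ_apply,
      Submodule.Quotient.eq] at hxy
    have h1 : ((x : V) - y) ∈ p' := hxy
    have h2 : ((x : V) - y) ∈ q := by
      have hx : (x : V) ∈ q := x.2.2
      have hy : (y : V) ∈ q := y.2.2
      exact sub_mem hx hy
    have : ((x : V) - y) ∈ p' ⊓ q := ⟨h1, h2⟩
    rw [hinf, Submodule.mem_bot, sub_eq_zero] at this
    exact Subtype.ext this
  · intro z
    obtain ⟨y, rfl⟩ := Submodule.mkQ_surjective _ z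
    have hy : (y : V) ∈ p' ⊔ q := hsup ▸ Submodule.mem_top
    obtain ⟨u, hu, w, hw, huw⟩ := Submodule.mem_sup.mp hy
    have hwp : w ∈ p := by
      have : w = (y : V) - u := by rw [← huw]; abel
      rw [this]; exact sub_mem y.2 (hpp' hu)
    refine ⟨⟨w, ⟨hwp, hw⟩⟩, ?_⟩
    rw [LinearMap.comp_apply, Submodule.mkQ_apply, Submodule.mkQ_apply, Submodule.Quotient.eq]
    show (⟨w, hwp⟩ : p) - y ∈ Submodule.comap p.subtype p'
    have : ((⟨w, hwp⟩ : p) - y : p) = (w : V) - y := rfl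
    simp only [Submodule.mem_comap, Submodule.coe_subtype, this]
    have : (w : V) - y = -u := by rw [← huw]; abel
    rw [this]
    exact neg_mem hu

end Aux

/-- A flag in an `m`-dimensional `R`-vector space `V`: a chain
`V = A^0 ⊃ A^1 ⊃ ... ⊃ A^m = 0` of submodules in which `A^i` has codimension `i`. -/
structure IsFlag {R V : Type*} [DivisionRing R] [AddCommGroup V] [Module R V]
    (m : ℕ) (A : ℕ → Submodule R V) : Prop where
  top : A 0 = ⊤
  bot : A m = ⊥
  antitone : ∀ ⦃i j : ℕ⦄, i ≤ j → j ≤ m → A j ≤ A i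
  codim : ∀ i ≤ m, Module.finrank R (V ⧸ A i) = i

/-- A pair of flags `(A, B)` is generic if for all `a, b ≥ 0` with `a + b = m` the
natural map `V → V/A^a ⊕ V/B^b` induced by the quotient projections is an isomorphism. -/
def IsGenericPair {R V : Type*} [DivisionRing R] [AddCommGroup V] [Module R V]
    (m : ℕ) (A B : ℕ → Submodule R V) : Prop :=
  ∀ a b : ℕ, a + b = m →
    Function.Bijective ⇑(LinearMap.prod (A a).mkQ (B b).mkQ)

/-- For a generic pair of flags `(A, B)` and `a + b = m + 1` with `a, b ≥ 1`, the two maps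
`A^{a-1} ⊓ B^{b-1} → gr^a A = A^{a-1}/A^a` and `A^{a-1} ⊓ B^{b-1} → gr^b B = B^{b-1}/B^b`,
given by inclusion followed by the quotient projection, are isomorphisms; in particular
`A^{a-1} ⊓ B^{b-1}` is an `R`-line. -/
theorem generic_pair_intersection_is_line
    {R V : Type*} [DivisionRing R] [AddCommGroup V] [Module R V]
    {m : ℕ} {A B : ℕ → Submodule R V}
    (hA : IsFlag m A) (hB : IsFlag m B) (hgen : IsGenericPair m A B)
    {a b : ℕ} (ha : 1 ≤ a) (hb : 1 ≤ b) (hab : a + b = m + 1) :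
    Function.Bijective
      ⇑((Submodule.comap (A (a - 1)).subtype (A a)).mkQ ∘ₗ
        Submodule.inclusion (show A (a - 1) ⊓ B (b - 1) ≤ A (a - 1) from inf_le_left)) ∧
    Function.Bijective
      ⇑((Submodule.comap (B (b - 1)).subtype (B b)).mkQ ∘ₗ
        Submodule.inclusion (show A (a - 1) ⊓ B (b - 1) ≤ B (b - 1) from inf_le_right)) ∧
    Module.finrank R ↥(A (a - 1) ⊓ B (b - 1)) = 1 := by
  have hm : 1 ≤ m := by omega
  have ham : a ≤ m := by omega
  have hbm : b ≤ m := by omega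
  have hfV : Module.finrank R V = m := by
    have e : (V ⧸ A m) ≃ₗ[R] V := Submodule.quotEquivOfEqBot (A m) hA.bot
    rw [← e.finrank_eq, hA.codim m le_rfl]
  haveI : FiniteDimensional R V := Module.finite_of_finrank_pos (by omega)
  have hfrA : ∀ i ≤ m, Module.finrank R (A i) = m - i := by
    intro i hi
    have h := Submodule.finrank_quotient_add_finrank (A i)
    rw [hA.codim i hi, hfV] at h
    omega
  have hfrB : ∀ i ≤ m, Module.finrank R (B i) = m - i := by
    intro i hi
    have h := Submodule.finrank_quotient_add_finrank (B i)
    rw [hB.codim i hi, hfV] at h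
    omega
  obtain ⟨hinf1, hsup1⟩ := gen_inf_sup (hgen a (b - 1) (by omega))
  obtain ⟨hinf2, hsup2⟩ := gen_inf_sup (hgen (a - 1) b (by omega))
  have hAle : A a ≤ A (a - 1) := hA.antitone (by omega) ham
  have hBle : B b ≤ B (b - 1) := hB.antitone (by omega) hbm
  have bij1 : Function.Bijective
      ⇑((Submodule.comap (A (a - 1)).subtype (A a)).mkQ ∘ₗ
        Submodule.inclusion (show A (a - 1) ⊓ B (b - 1) ≤ A (a - 1) from inf_le_left)) :=
    aux_bij rfl _ hAle hinf1 hsup1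
  have bij2 : Function.Bijective
      ⇑((Submodule.comap (B (b - 1)).subtype (B b)).mkQ ∘ₗ
        Submodule.inclusion (show A (a - 1) ⊓ B (b - 1) ≤ B (b - 1) from inf_le_right)) :=
    aux_bij (inf_comm (A (a - 1)) (B (b - 1))) _ hBle
      (by rw [inf_comm]; exact hinf2) (by rw [sup_comm]; exact hsup2)
  refine ⟨bij1, bij2, ?_⟩
  have e := LinearEquiv.ofBijective _ bij1
  rw [e.finrank_eq]
  have h1 := Submodule.finrank_quotient_add_finrank (Submodule.comap (A (a - 1)).subtype (A a))
  rw [(Submodule.comapSubtypeEquivOfLe hAle).finrank_eq, hfrA (a - 1) (by omega),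
    hfrA a ham] at h1
  omega
end

section
/- Let (A,B,C) be a generic triple of flags in an m-dimensional R-vector space V over a skew field R, and let a,b,c ≥ 1 be integers with a+b+c = m+2. Then L := A^{a-1} ∩ B^{b-1} ∩ C^{c-1} is an R-line, and each of the three maps L → gr^a A, L → gr^b B, L → gr^c C, given by the inclusion of L into A^{a-1} (respectively B^{b-1}, C^{c-1}) followed by the quotient projection, is an isomorphism of left R-modules. Consequently, the three induced isomorphisms gr^a A → gr^b B, gr^b B → gr^c C, gr^c C → gr^a A (each obtained by composing the inverse of one of these projections with another) compose to the identity of gr^a A. -/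
/-- A triple of flags `(A, B, C)` is generic if for all `a, b, c ≥ 0` with `a + b + c = m`
the natural map `V → V/A^a ⊕ V/B^b ⊕ V/C^c` is an isomorphism. -/
def IsGenericTriple {R V : Type*} [DivisionRing R] [AddCommGroup V] [Module R V]
    (m : ℕ) (A B C : ℕ → Submodule R V) : Prop :=
  ∀ a b c : ℕ, a + b + c = m →
    Function.Bijective
      ⇑(LinearMap.prod (A a).mkQ (LinearMap.prod (B b).mkQ (C c).mkQ))

private lemma triple_comp_refl {R M N P Q : Type*} [Semiring R]
    [AddCommMonoid M] [AddCommMonoid N] [AddCommMonoid P] [AddCommMonoid Q]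
    [Module R M] [Module R N] [Module R P] [Module R Q]
    (eA : M ≃ₗ[R] N) (eB : M ≃ₗ[R] P) (eC : M ≃ₗ[R] Q) :
    (eA.symm.trans eB).trans ((eB.symm.trans eC).trans (eC.symm.trans eA)) =
      LinearEquiv.refl R N := by
  ext x
  simp

/-- For a generic triple of flags and `a + b + c = m + 2` with `a, b, c ≥ 1`,
`L := A^{a-1} ⊓ B^{b-1} ⊓ C^{c-1}` is a line, the three maps (inclusion followed by
projection) `L → gr^a A`, `L → gr^b B`, `L → gr^c C` are isomorphisms, and the three
induced isomorphisms `gr^a A → gr^b B → gr^c C → gr^a A` compose to the identity. -/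
theorem generic_triple_intersection_line
    {R V : Type*} [DivisionRing R] [AddCommGroup V] [Module R V]
    {m : ℕ} {A B C : ℕ → Submodule R V}
    (hA : IsFlag m A) (hB : IsFlag m B) (hC : IsFlag m C)
    (hgen : IsGenericTriple m A B C)
    {a b c : ℕ} (ha : 1 ≤ a) (hb : 1 ≤ b) (hc : 1 ≤ c) (habc : a + b + c = m + 2) :
    Module.finrank R ↥(A (a - 1) ⊓ B (b - 1) ⊓ C (c - 1)) = 1 ∧
    ∃ (eA : ↥(A (a - 1) ⊓ B (b - 1) ⊓ C (c - 1)) ≃ₗ[R]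
            (↥(A (a - 1)) ⧸ Submodule.comap (A (a - 1)).subtype (A a)))
      (eB : ↥(A (a - 1) ⊓ B (b - 1) ⊓ C (c - 1)) ≃ₗ[R]
            (↥(B (b - 1)) ⧸ Submodule.comap (B (b - 1)).subtype (B b)))
      (eC : ↥(A (a - 1) ⊓ B (b - 1) ⊓ C (c - 1)) ≃ₗ[R]
            (↥(C (c - 1)) ⧸ Submodule.comap (C (c - 1)).subtype (C c))),
      eA.toLinearMap = (Submodule.comap (A (a - 1)).subtype (A a)).mkQ ∘ₗ
        Submodule.inclusion
          (show A (a - 1) ⊓ B (b - 1) ⊓ C (c - 1) ≤ A (a - 1) from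
            le_trans inf_le_left inf_le_left) ∧
      eB.toLinearMap = (Submodule.comap (B (b - 1)).subtype (B b)).mkQ ∘ₗ
        Submodule.inclusion
          (show A (a - 1) ⊓ B (b - 1) ⊓ C (c - 1) ≤ B (b - 1) from
            le_trans inf_le_left inf_le_right) ∧
      eC.toLinearMap = (Submodule.comap (C (c - 1)).subtype (C c)).mkQ ∘ₗ
        Submodule.inclusion
          (show A (a - 1) ⊓ B (b - 1) ⊓ C (c - 1) ≤ C (c - 1) from inf_le_right) ∧
      (eA.symm.trans eB).trans ((eB.symm.trans eC).trans (eC.symm.trans eA)) =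
        LinearEquiv.refl R
          (↥(A (a - 1)) ⧸ Submodule.comap (A (a - 1)).subtype (A a)) := by
  have hm : 1 ≤ m := by omega
  have ham : a ≤ m := by omega
  have hbm : b ≤ m := by omega
  have hcm : c ≤ m := by omega
  -- V is finite dimensional of dimension m
  have hV : Module.finrank R V = m := by
    have h := hA.codim m le_rfl
    rw [hA.bot] at h
    rwa [(Submodule.quotEquivOfEqBot ⊥ rfl).finrank_eq] at h
  haveI : Module.Finite R V := Module.finite_of_finrank_pos (by omega)
  -- dimensions of flag pieces
  have key : ∀ (D : ℕ → Submodule R V), IsFlag m D → ∀ i ≤ m,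
      Module.finrank R (D i) = m - i := by
    intro D hD i hi
    have h1 := Submodule.finrank_quotient_add_finrank (D i)
    rw [hD.codim i hi, hV] at h1
    omega
  -- vanishing of generic triple intersections
  have zero : ∀ a' b' c', a' + b' + c' = m → ∀ x : V,
      x ∈ A a' → x ∈ B b' → x ∈ C c' → x = 0 := by
    intro a' b' c' h x hx hy hz
    refine (hgen a' b' c' h).injective (a₁ := x) (a₂ := 0) ?_
    simp [Prod.ext_iff, Submodule.Quotient.mk_eq_zero, hx, hy, hz]
  -- graded pieces are one-dimensional
  have hgr : ∀ (D : ℕ → Submodule R V), IsFlag m D → ∀ i, 1 ≤ i → i ≤ m →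
      Module.finrank R (↥(D (i-1)) ⧸ Submodule.comap (D (i-1)).subtype (D i)) = 1 := by
    intro D hD i h1 h2
    have hle : D i ≤ D (i-1) := hD.antitone (by omega) h2
    have e := (Submodule.comapSubtypeEquivOfLe hle).finrank_eq
    have h3 := Submodule.finrank_quotient_add_finrank
      (Submodule.comap (D (i-1)).subtype (D i))
    rw [e, key D hD i h2, key D hD (i-1) (by omega)] at h3
    omega
  -- the three maps
  set L := A (a - 1) ⊓ B (b - 1) ⊓ C (c - 1) with hLdef
  set φA : ↥L →ₗ[R] (↥(A (a - 1)) ⧸ Submodule.comap (A (a - 1)).subtype (A a)) :=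
    (Submodule.comap (A (a - 1)).subtype (A a)).mkQ ∘ₗ Submodule.inclusion
      (show L ≤ A (a - 1) from le_trans inf_le_left inf_le_left) with hφA
  set φB : ↥L →ₗ[R] (↥(B (b - 1)) ⧸ Submodule.comap (B (b - 1)).subtype (B b)) :=
    (Submodule.comap (B (b - 1)).subtype (B b)).mkQ ∘ₗ Submodule.inclusion
      (show L ≤ B (b - 1) from le_trans inf_le_left inf_le_right) with hφB
  set φC : ↥L →ₗ[R] (↥(C (c - 1)) ⧸ Submodule.comap (C (c - 1)).subtype (C c)) :=
    (Submodule.comap (C (c - 1)).subtype (C c)).mkQ ∘ₗ Submodule.inclusion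
      (show L ≤ C (c - 1) from inf_le_right) with hφC
  -- injectivity
  have hinjA : Function.Injective φA := by
    rw [injective_iff_map_eq_zero]
    intro x hx
    have hxa : (x : V) ∈ A a := by
      have := (Submodule.Quotient.mk_eq_zero _).1 hx
      simpa using this
    obtain ⟨⟨h1, h2⟩, h3⟩ := x.2
    exact Subtype.ext (zero a (b-1) (c-1) (by omega) x hxa h2 h3)
  have hinjB : Function.Injective φB := by
    rw [injective_iff_map_eq_zero]
    intro x hx
    have hxb : (x : V) ∈ B b := by
      have := (Submodule.Quotient.mk_eq_zero _).1 hx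
      simpa using this
    obtain ⟨⟨h1, h2⟩, h3⟩ := x.2
    exact Subtype.ext (zero (a-1) b (c-1) (by omega) x h1 hxb h3)
  have hinjC : Function.Injective φC := by
    rw [injective_iff_map_eq_zero]
    intro x hx
    have hxc : (x : V) ∈ C c := by
      have := (Submodule.Quotient.mk_eq_zero _).1 hx
      simpa using this
    obtain ⟨⟨h1, h2⟩, h3⟩ := x.2
    exact Subtype.ext (zero (a-1) (b-1) c (by omega) x h1 h2 hxc)
  -- finrank L = 1
  have hgrA := hgr A hA a ha ham
  have hgrB := hgr B hB b hb hbm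
  have hgrC := hgr C hC c hc hcm
  have hLle : Module.finrank R ↥L ≤ 1 := by
    have := LinearMap.finrank_le_finrank_of_injective hinjA
    omega
  have hLge : 1 ≤ Module.finrank R ↥L := by
    have e1 := Submodule.finrank_sup_add_finrank_inf_eq (A (a-1)) (B (b-1))
    have e2 := Submodule.finrank_sup_add_finrank_inf_eq (A (a-1) ⊓ B (b-1)) (C (c-1))
    have u1 := Submodule.finrank_le (A (a-1) ⊔ B (b-1))
    have u2 := Submodule.finrank_le ((A (a-1) ⊓ B (b-1)) ⊔ C (c-1))
    rw [hV] at u1 u2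
    rw [key A hA (a-1) (by omega), key B hB (b-1) (by omega)] at e1
    rw [key C hC (c-1) (by omega)] at e2
    have hL' : Module.finrank R ↥((A (a-1) ⊓ B (b-1)) ⊓ C (c-1))
        = Module.finrank R ↥L := rfl
    omega
  have hL1 : Module.finrank R ↥L = 1 := le_antisymm hLle hLge
  refine ⟨hL1, φA.linearEquivOfInjective hinjA (by rw [hL1, hgrA]),
    φB.linearEquivOfInjective hinjB (by rw [hL1, hgrB]),
    φC.linearEquivOfInjective hinjC (by rw [hL1, hgrC]), rfl, rfl, rfl, ?_⟩
  exact triple_comp_refl _ _ _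
end

section
/- Let R be a skew field, P a 2-dimensional R-vector space, and A, B, C three pairwise distinct 1-dimensional R-submodules of P. For two distinct lines X, Y among A, B, C, the composite X ↪ P → P/Y (inclusion followed by quotient projection) is an isomorphism; denote it p_{X,Y}. Then the composition p_{A,C}^{-1} ∘ p_{B,C} ∘ p_{B,A}^{-1} ∘ p_{C,A} ∘ p_{C,B}^{-1} ∘ p_{A,B} : A → A of the six isomorphisms A → P/B ← C → P/A ← B → P/C ← A equals minus the identity map of A. -/
open Module Submodule

section
variable {R P : Type*} [DivisionRing R] [AddCommGroup P] [Module R P]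

lemma line_inf_eq_bot [FiniteDimensional R P] {X Y : Submodule R P}
    (hX : finrank R ↥X = 1) (hY : finrank R ↥Y = 1) (hXY : X ≠ Y) : X ⊓ Y = ⊥ := by
  by_contra h
  have h1 : 0 < finrank R ↥(X ⊓ Y) := Module.finrank_pos_iff.mpr
    (Submodule.nontrivial_iff_ne_bot.mpr h)
  have h2 : finrank R ↥(X ⊓ Y) ≤ 1 := hX ▸ Submodule.finrank_mono inf_le_left
  have h3 : finrank R ↥(X ⊓ Y) = 1 := le_antisymm h2 h1
  have e1 : X ⊓ Y = X := Submodule.eq_of_le_of_finrank_eq inf_le_left (h3.trans hX.symm)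
  have e2 : X ⊓ Y = Y := Submodule.eq_of_le_of_finrank_eq inf_le_right (h3.trans hY.symm)
  exact hXY (e1 ▸ e2)

lemma line_bij (hP : finrank R P = 2) {X Y : Submodule R P}
    (hX : finrank R ↥X = 1) (hY : finrank R ↥Y = 1) (hXY : X ≠ Y) :
    Function.Bijective (Y.mkQ ∘ₗ X.subtype) := by
  have : FiniteDimensional R P := .of_finrank_pos (by omega)
  have hinf := line_inf_eq_bot hX hY hXY
  have hsup : X ⊔ Y = ⊤ :=
    Submodule.eq_top_of_disjoint X Y (by rw [hX, hY, hP]) (disjoint_iff.mpr hinf)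
  constructor
  · rw [← LinearMap.ker_eq_bot]
    ext v
    simp only [LinearMap.mem_ker, LinearMap.coe_comp, Function.comp_apply, coe_subtype,
      Submodule.mkQ_apply, Submodule.Quotient.mk_eq_zero, Submodule.mem_bot]
    constructor
    · intro hv
      have : (v : P) ∈ X ⊓ Y := ⟨v.2, hv⟩
      rw [hinf, Submodule.mem_bot] at this
      exact Subtype.ext this
    · rintro rfl; simp
  · intro q
    obtain ⟨p, rfl⟩ := Y.mkQ_surjective q
    have hp : p ∈ X ⊔ Y := hsup ▸ Submodule.mem_top
    obtain ⟨x, hx, y, hy, rfl⟩ := Submodule.mem_sup.mp hp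
    refine ⟨⟨x, hx⟩, ?_⟩
    simp only [LinearMap.coe_comp, Function.comp_apply, coe_subtype, Submodule.mkQ_apply]
    rw [Submodule.Quotient.eq]
    simpa using Y.neg_mem hy

end

section
variable {R P : Type*} [DivisionRing R] [AddCommGroup P] [Module R P]

lemma line_gen [FiniteDimensional R P] {X : Submodule R P} (hX : finrank R ↥X = 1) :
    ∃ a : P, a ∈ X ∧ a ≠ 0 ∧ X = Submodule.span R {a} := by
  have hbot : X ≠ ⊥ := by
    intro h; rw [h] at hX; simp at hX
  obtain ⟨a, ha, ha0⟩ := Submodule.exists_mem_ne_zero_of_ne_bot hbot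
  refine ⟨a, ha, ha0, ?_⟩
  refine (Submodule.eq_of_le_of_finrank_eq ((Submodule.span_singleton_le_iff_mem a X).mpr ha) ?_).symm
  rw [hX, finrank_span_singleton ha0]

end


/-- Let `P` be a 2-dimensional vector space over a skew field `R` and `A`, `B`, `C`
three pairwise distinct lines in `P`.  Each composite `X ↪ P → P/Y` (inclusion followed
by projection), for distinct lines `X ≠ Y` among `A, B, C`, is an isomorphism, and the
composition `A → P/B ← C → P/A ← B → P/C ← A` of the six isomorphisms equals minus the
identity of `A`. -/
theorem six_line_isomorphisms_compose_to_minus_id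
    {R P : Type*} [DivisionRing R] [AddCommGroup P] [Module R P]
    (hP : Module.finrank R P = 2)
    (A B C : Submodule R P)
    (hA : Module.finrank R ↥A = 1) (hB : Module.finrank R ↥B = 1)
    (hC : Module.finrank R ↥C = 1)
    (hAB : A ≠ B) (hAC : A ≠ C) (hBC : B ≠ C) :
    ∃ (pAB : ↥A ≃ₗ[R] P ⧸ B) (pCB : ↥C ≃ₗ[R] P ⧸ B) (pCA : ↥C ≃ₗ[R] P ⧸ A)
      (pBA : ↥B ≃ₗ[R] P ⧸ A) (pBC : ↥B ≃ₗ[R] P ⧸ C) (pAC : ↥A ≃ₗ[R] P ⧸ C),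
      pAB.toLinearMap = B.mkQ ∘ₗ A.subtype ∧
      pCB.toLinearMap = B.mkQ ∘ₗ C.subtype ∧
      pCA.toLinearMap = A.mkQ ∘ₗ C.subtype ∧
      pBA.toLinearMap = A.mkQ ∘ₗ B.subtype ∧
      pBC.toLinearMap = C.mkQ ∘ₗ B.subtype ∧
      pAC.toLinearMap = C.mkQ ∘ₗ A.subtype ∧
      ∀ v : ↥A, pAC.symm (pBC (pBA.symm (pCA (pCB.symm (pAB v))))) = -v := by
  have : FiniteDimensional R P := .of_finrank_pos (by omega)
  refine ⟨.ofBijective _ (line_bij hP hA hB hAB),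
    .ofBijective _ (line_bij hP hC hB hBC.symm),
    .ofBijective _ (line_bij hP hC hA hAC.symm),
    .ofBijective _ (line_bij hP hB hA hAB.symm),
    .ofBijective _ (line_bij hP hB hC hBC),
    .ofBijective _ (line_bij hP hA hC hAC),
    rfl, rfl, rfl, rfl, rfl, rfl, ?_⟩
  -- set up generators
  obtain ⟨a, haA, ha0, hAs⟩ := line_gen hA
  -- find c ∈ C of the form a + b with b ∈ B, b ≠ 0
  have hsup : A ⊔ B = ⊤ := Submodule.eq_top_of_disjoint A B (by rw [hA, hB, hP])
    (disjoint_iff.mpr (line_inf_eq_bot hA hB hAB))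
  obtain ⟨c₀, hc₀C, hc₀0, _⟩ := line_gen hC
  obtain ⟨x, hx, y, hy, hxy⟩ := Submodule.mem_sup.mp (hsup ▸ Submodule.mem_top : c₀ ∈ A ⊔ B)
  rw [hAs, Submodule.mem_span_singleton] at hx
  obtain ⟨r, rfl⟩ := hx
  have hr : r ≠ 0 := by
    rintro rfl
    rw [zero_smul, zero_add] at hxy
    exact hc₀0 ((Submodule.mem_bot R).mp
      ((line_inf_eq_bot hB hC hBC) ▸ (Submodule.mem_inf.mpr ⟨hxy ▸ hy, hc₀C⟩)))
  set b : P := r⁻¹ • y with hbdef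
  have hbB : b ∈ B := B.smul_mem _ hy
  set c : P := a + b with hcdef
  have hcC : c ∈ C := by
    have : c = r⁻¹ • c₀ := by
      rw [hcdef, ← hxy, smul_add, smul_smul, inv_mul_cancel₀ hr, one_smul, hbdef]
    rw [this]; exact C.smul_mem _ hc₀C
  have hb0 : b ≠ 0 := by
    rintro h
    have : c = a := by rw [hcdef, h, add_zero]
    have hcA : c ∈ A ⊓ C := ⟨this ▸ haA, hcC⟩
    rw [line_inf_eq_bot hA hC hAC, Submodule.mem_bot] at hcA
    exact ha0 (this ▸ hcA)
  -- now the computation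
  intro v
  obtain ⟨s, hs⟩ := (Submodule.mem_span_singleton).mp (hAs ▸ v.2 : (v : P) ∈ Submodule.span R {a})
  have key : ∀ {X Y : Submodule R P} (h : Function.Bijective (Y.mkQ ∘ₗ X.subtype)) (w : ↥X),
      (LinearEquiv.ofBijective _ h) w = Submodule.Quotient.mk (w : P) := fun _ _ => rfl
  have keysymm : ∀ {X Y : Submodule R P} (h : Function.Bijective (Y.mkQ ∘ₗ X.subtype))
      (w : ↥X) (q : P ⧸ Y), q = Submodule.Quotient.mk (w : P) →
      (LinearEquiv.ofBijective _ h).symm q = w := by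
    intro X Y h w q hq
    rw [LinearEquiv.symm_apply_eq, key, hq]
  rw [key (line_bij hP hA hB hAB) v]
  rw [keysymm (line_bij hP hC hB hBC.symm) ⟨s • c, C.smul_mem _ hcC⟩ _ (by
    rw [Submodule.Quotient.eq]
    have : (v : P) - s • c = -(s • b) := by rw [← hs, hcdef, smul_add]; abel
    rw [this]; exact B.neg_mem (B.smul_mem _ hbB))]
  rw [key (line_bij hP hC hA hAC.symm)]
  rw [keysymm (line_bij hP hB hA hAB.symm) ⟨s • b, B.smul_mem _ hbB⟩ _ (by
    rw [Submodule.Quotient.eq]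
    have : s • c - s • b = s • a := by rw [hcdef, smul_add]; abel
    rw [this]; exact hs ▸ v.2)]
  rw [key (line_bij hP hB hC hBC)]
  apply keysymm (line_bij hP hA hC hAC)
  rw [Submodule.Quotient.eq]
  have : s • b - ((-v : ↥A) : P) = s • c := by
    simp only [Submodule.coe_neg, sub_neg_eq_add, ← hs, hcdef, smul_add]; abel
  rw [this]; exact C.smul_mem _ hcC
end

section
/- Let (a1,a2), (b1,b2), (c1,c2) be three decorated flags in a 2-dimensional R-vector space V over a skew field R, whose flag lines Ra1, Rb1, Rc1 are pairwise distinct. Then the six invariants satisfy the six-term relation Δ(a1,b2) · Δ(c1,b2)^{-1} · Δ(c1,a2) · Δ(b1,a2)^{-1} · Δ(b1,c2) · Δ(a1,c2)^{-1} = -1 in R. -/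
section
variable {R V : Type*} [DivisionRing R] [AddCommGroup V] [Module R V]

lemma aux_not_mem_span {x y : V} (hx : x ≠ 0)
    (h : Submodule.span R {x} ≠ Submodule.span R {y}) : x ∉ Submodule.span R {y} := by
  intro hm
  obtain ⟨r, rfl⟩ := Submodule.mem_span_singleton.1 hm
  have hr : r ≠ 0 := by rintro rfl; simp at hx
  exact h (Submodule.span_singleton_smul_eq (IsUnit.mk0 r hr) y)

lemma aux_smul_cancel {x y : R} {v : V} (hv : v ≠ 0) (h : x • v = y • v) : x = y := by
  by_contra hxy
  have h0 : (x - y) • v = 0 := by rw [sub_smul, h, sub_self]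
  have : (x - y)⁻¹ • ((x - y) • v) = 0 := by rw [h0, smul_zero]
  rw [smul_smul, inv_mul_cancel₀ (sub_ne_zero.2 hxy), one_smul] at this
  exact hv this
end

/-- The six-term relation for a triple of decorated flags `(a1,a2), (b1,b2), (c1,c2)`
in a 2-dimensional vector space over a skew field `R`:
`Δ(a1,b2)·Δ(c1,b2)⁻¹·Δ(c1,a2)·Δ(b1,a2)⁻¹·Δ(b1,c2)·Δ(a1,c2)⁻¹ = -1`,
where `Δ(u,v2)` is defined by `[u] = Δ(u,v2) • v2` in `V ⧸ R·v1`. -/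
theorem six_term_relation_of_decorated_flags
    {R V : Type*} [DivisionRing R] [AddCommGroup V] [Module R V]
    (hV : Module.finrank R V = 2)
    (a1 b1 c1 : V) (ha1 : a1 ≠ 0) (hb1 : b1 ≠ 0) (hc1 : c1 ≠ 0)
    (a2 : V ⧸ Submodule.span R {a1}) (b2 : V ⧸ Submodule.span R {b1})
    (c2 : V ⧸ Submodule.span R {c1})
    (ha2 : a2 ≠ 0) (hb2 : b2 ≠ 0) (hc2 : c2 ≠ 0)
    (hab : Submodule.span R {a1} ≠ Submodule.span R {b1})
    (hac : Submodule.span R {a1} ≠ Submodule.span R {c1})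
    (hbc : Submodule.span R {b1} ≠ Submodule.span R {c1})
    (Dab Dcb Dca Dba Dbc Dac : R)
    (hDab : (Submodule.Quotient.mk a1 : V ⧸ Submodule.span R {b1}) = Dab • b2)
    (hDcb : (Submodule.Quotient.mk c1 : V ⧸ Submodule.span R {b1}) = Dcb • b2)
    (hDca : (Submodule.Quotient.mk c1 : V ⧸ Submodule.span R {a1}) = Dca • a2)
    (hDba : (Submodule.Quotient.mk b1 : V ⧸ Submodule.span R {a1}) = Dba • a2)
    (hDbc : (Submodule.Quotient.mk b1 : V ⧸ Submodule.span R {c1}) = Dbc • c2)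
    (hDac : (Submodule.Quotient.mk a1 : V ⧸ Submodule.span R {c1}) = Dac • c2) :
    Dab * Dcb⁻¹ * Dca * Dba⁻¹ * Dbc * Dac⁻¹ = -1 := by
  -- nonvanishing of the Δ's that get inverted
  have hmkab : (Submodule.Quotient.mk a1 : V ⧸ Submodule.span R {b1}) ≠ 0 :=
    fun h => aux_not_mem_span ha1 hab ((Submodule.Quotient.mk_eq_zero _).1 h)
  have hmkba : (Submodule.Quotient.mk b1 : V ⧸ Submodule.span R {a1}) ≠ 0 :=
    fun h => aux_not_mem_span hb1 hab.symm ((Submodule.Quotient.mk_eq_zero _).1 h)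
  have hmkac : (Submodule.Quotient.mk a1 : V ⧸ Submodule.span R {c1}) ≠ 0 :=
    fun h => aux_not_mem_span ha1 hac ((Submodule.Quotient.mk_eq_zero _).1 h)
  have hDab0 : Dab ≠ 0 := by rintro rfl; rw [hDab, zero_smul] at hmkab; exact hmkab rfl
  have hDba0 : Dba ≠ 0 := by rintro rfl; rw [hDba, zero_smul] at hmkba; exact hmkba rfl
  have hDac0 : Dac ≠ 0 := by rintro rfl; rw [hDac, zero_smul] at hmkac; exact hmkac rfl
  -- a1, b1 are linearly independent and span V
  have hli : LinearIndependent R ![a1, b1] := by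
    rw [LinearIndependent.pair_iff' ha1]
    intro a hae
    exact aux_not_mem_span hb1 hab.symm (hae ▸ Submodule.smul_mem _ a
      (Submodule.mem_span_singleton_self a1))
  have : FiniteDimensional R V := FiniteDimensional.of_finrank_eq_succ hV
  have hspan : Submodule.span R {a1, b1} = ⊤ := by
    apply Submodule.eq_top_of_finrank_eq
    have hr : Set.range ![a1, b1] = {a1, b1} := by
      ext x; simp [Fin.exists_fin_two, or_comm]
    have := finrank_span_eq_card (R := R) hli
    rw [hr] at this
    rw [this, hV]; rfl
  obtain ⟨α, β, hc⟩ := Submodule.mem_span_pair.1 (hspan ▸ Submodule.mem_top (x := c1))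
  -- α, β ≠ 0
  have hα : α ≠ 0 := by
    rintro rfl
    rw [zero_smul, zero_add] at hc
    exact aux_not_mem_span hc1 hbc.symm (hc ▸ Submodule.smul_mem _ β
      (Submodule.mem_span_singleton_self b1))
  have hβ : β ≠ 0 := by
    rintro rfl
    rw [zero_smul, add_zero] at hc
    exact aux_not_mem_span hc1 hac.symm (hc ▸ Submodule.smul_mem _ α
      (Submodule.mem_span_singleton_self a1))
  -- relations
  have h1 : Dcb = α * Dab := by
    apply aux_smul_cancel hb2
    rw [← hDcb, ← hc]
    have : (Submodule.Quotient.mk (β • b1) : V ⧸ Submodule.span R {b1}) = 0 := by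
      rw [Submodule.Quotient.mk_eq_zero]
      exact Submodule.smul_mem _ β (Submodule.mem_span_singleton_self b1)
    rw [Submodule.Quotient.mk_add, this, add_zero, Submodule.Quotient.mk_smul, hDab, smul_smul]
  have h2 : Dca = β * Dba := by
    apply aux_smul_cancel ha2
    rw [← hDca, ← hc]
    have : (Submodule.Quotient.mk (α • a1) : V ⧸ Submodule.span R {a1}) = 0 := by
      rw [Submodule.Quotient.mk_eq_zero]
      exact Submodule.smul_mem _ α (Submodule.mem_span_singleton_self a1)
    rw [Submodule.Quotient.mk_add, this, zero_add, Submodule.Quotient.mk_smul, hDba, smul_smul]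
  have h3 : Dbc = -(β⁻¹ * α) * Dac := by
    apply aux_smul_cancel hc2
    have hb1eq : b1 = β⁻¹ • c1 - (β⁻¹ * α) • a1 := by
      rw [← hc, smul_add, smul_smul β⁻¹ β, inv_mul_cancel₀ hβ, one_smul, ← smul_smul]
      abel
    rw [← hDbc, hb1eq]
    have : (Submodule.Quotient.mk (β⁻¹ • c1) : V ⧸ Submodule.span R {c1}) = 0 := by
      rw [Submodule.Quotient.mk_eq_zero]
      exact Submodule.smul_mem _ _ (Submodule.mem_span_singleton_self c1)
    rw [Submodule.Quotient.mk_sub, this, zero_sub, Submodule.Quotient.mk_smul, hDac,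
      smul_smul, ← neg_smul, neg_mul]
  rw [h1, h2, h3, mul_inv_rev, mul_inv_cancel_left₀ hDab0,
    ← mul_assoc α⁻¹ β Dba, mul_inv_cancel_right₀ hDba0,
    ← mul_assoc (α⁻¹ * β) (-(β⁻¹ * α)) Dac, mul_inv_cancel_right₀ hDac0,
    mul_neg, ← mul_assoc (α⁻¹ * β) β⁻¹ α, mul_assoc α⁻¹ β β⁻¹,
    mul_inv_cancel₀ hβ, mul_one, inv_mul_cancel₀ hα]
end

section
/- Let (a1,a2), (b1,b2), (c1,c2), (d1,d2) be four decorated flags in a 2-dimensional R-vector space V over a skew field R, whose flag lines Ra1, Rb1, Rc1, Rd1 are pairwise distinct. Then the quantum Plücker relation holds: Δ(a1,c2) = Δ(a1,b2)·Δ(b2,d1)·Δ(d1,c2) + Δ(a1,d2)·Δ(d2,b1)·Δ(b1,c2), where Δ(b2,d1) := Δ(d1,b2)^{-1} and Δ(d2,b1) := Δ(b1,d2)^{-1}. -/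
lemma qp_not_mem {R V : Type*} [DivisionRing R] [AddCommGroup V] [Module R V]
    {u v : V} (hv : v ≠ 0)
    (hne : Submodule.span R {u} ≠ Submodule.span R {v}) :
    v ∉ Submodule.span R {u} := by
  intro hmem
  obtain ⟨r, hr⟩ := Submodule.mem_span_singleton.mp hmem
  have hr0 : r ≠ 0 := by rintro rfl; simp at hr; exact hv hr.symm
  apply hne
  apply le_antisymm
  · rw [Submodule.span_singleton_le_iff_mem, Submodule.mem_span_singleton]
    exact ⟨r⁻¹, by rw [← hr, smul_smul, inv_mul_cancel₀ hr0, one_smul]⟩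
  · rw [Submodule.span_singleton_le_iff_mem, Submodule.mem_span_singleton]
    exact ⟨r, hr⟩

/-- The quantum Plücker relation for four decorated flags `(a1,a2), ..., (d1,d2)` in a
2-dimensional vector space over a skew field `R` with pairwise distinct flag lines:
`Δ(a1,c2) = Δ(a1,b2)·Δ(d1,b2)⁻¹·Δ(d1,c2) + Δ(a1,d2)·Δ(b1,d2)⁻¹·Δ(b1,c2)`,
where `Δ(u,v2)` is defined by `[u] = Δ(u,v2) • v2` in `V ⧸ R·v1`. -/
theorem quantum_pluecker_relation
    {R V : Type*} [DivisionRing R] [AddCommGroup V] [Module R V]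
    (hV : Module.finrank R V = 2)
    (a1 b1 c1 d1 : V) (ha1 : a1 ≠ 0) (hb1 : b1 ≠ 0) (hc1 : c1 ≠ 0) (hd1 : d1 ≠ 0)
    (a2 : V ⧸ Submodule.span R {a1}) (b2 : V ⧸ Submodule.span R {b1})
    (c2 : V ⧸ Submodule.span R {c1}) (d2 : V ⧸ Submodule.span R {d1})
    (ha2 : a2 ≠ 0) (hb2 : b2 ≠ 0) (hc2 : c2 ≠ 0) (hd2 : d2 ≠ 0)
    (hab : Submodule.span R {a1} ≠ Submodule.span R {b1})
    (hac : Submodule.span R {a1} ≠ Submodule.span R {c1})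
    (had : Submodule.span R {a1} ≠ Submodule.span R {d1})
    (hbc : Submodule.span R {b1} ≠ Submodule.span R {c1})
    (hbd : Submodule.span R {b1} ≠ Submodule.span R {d1})
    (hcd : Submodule.span R {c1} ≠ Submodule.span R {d1})
    (Dac Dab Ddb Ddc Dad Dbd Dbc : R)
    (hDac : (Submodule.Quotient.mk a1 : V ⧸ Submodule.span R {c1}) = Dac • c2)
    (hDab : (Submodule.Quotient.mk a1 : V ⧸ Submodule.span R {b1}) = Dab • b2)
    (hDdb : (Submodule.Quotient.mk d1 : V ⧸ Submodule.span R {b1}) = Ddb • b2)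
    (hDdc : (Submodule.Quotient.mk d1 : V ⧸ Submodule.span R {c1}) = Ddc • c2)
    (hDad : (Submodule.Quotient.mk a1 : V ⧸ Submodule.span R {d1}) = Dad • d2)
    (hDbd : (Submodule.Quotient.mk b1 : V ⧸ Submodule.span R {d1}) = Dbd • d2)
    (hDbc : (Submodule.Quotient.mk b1 : V ⧸ Submodule.span R {c1}) = Dbc • c2) :
    Dac = Dab * Ddb⁻¹ * Ddc + Dad * Dbd⁻¹ * Dbc := by
  have hdb : d1 ∉ Submodule.span R {b1} := qp_not_mem hd1 hbd
  have hbd' : b1 ∉ Submodule.span R {d1} := qp_not_mem hb1 (Ne.symm hbd)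
  -- b1, d1 linearly independent
  have hli : LinearIndependent R ![b1, d1] := by
    rw [LinearIndependent.pair_iff]
    intro s t hst
    have ht : t = 0 := by
      by_contra ht
      apply hdb
      rw [Submodule.mem_span_singleton]
      refine ⟨-(t⁻¹ * s), ?_⟩
      have h1 : t • d1 = -(s • b1) := by rw [eq_neg_iff_add_eq_zero, add_comm]; exact hst
      calc (-(t⁻¹ * s)) • b1 = t⁻¹ • -(s • b1) := by rw [neg_smul, mul_smul, smul_neg]
        _ = t⁻¹ • (t • d1) := by rw [h1]
        _ = d1 := by rw [smul_smul, inv_mul_cancel₀ ht, one_smul]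
    subst ht
    simp only [zero_smul, add_zero] at hst
    rcases smul_eq_zero.mp hst with hs | h
    · exact ⟨hs, rfl⟩
    · exact absurd h hb1
  have hfd : FiniteDimensional R V := Module.finite_of_finrank_pos (by omega)
  have hspan : Submodule.span R {b1, d1} = ⊤ := by
    have := hli.span_eq_top_of_card_eq_finrank (by simp [hV])
    rw [← this]
    congr 1
    simp [Set.pair_comm]
  have ha1mem : a1 ∈ Submodule.span R {b1, d1} := hspan ▸ Submodule.mem_top
  obtain ⟨x, y, hxy⟩ := Submodule.mem_span_pair.mp ha1mem
  -- reductions in the three quotients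
  have coef : ∀ (w : V) (q2 : V ⧸ Submodule.span R {w}) (s t : R),
      q2 ≠ 0 → s • q2 = t • q2 → s = t := by
    intro w q2 s t hq2 h
    have : (s - t) • q2 = 0 := by rw [sub_smul, h, sub_self]
    rcases smul_eq_zero.mp this with h' | h'
    · exact sub_eq_zero.mp h'
    · exact absurd h' hq2
  have mkb0 : (Submodule.Quotient.mk b1 : V ⧸ Submodule.span R {b1}) = 0 :=
    (Submodule.Quotient.mk_eq_zero _).mpr (Submodule.mem_span_singleton_self b1)
  have mkd0 : (Submodule.Quotient.mk d1 : V ⧸ Submodule.span R {d1}) = 0 :=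
    (Submodule.Quotient.mk_eq_zero _).mpr (Submodule.mem_span_singleton_self d1)
  have hDdb0 : Ddb ≠ 0 := by
    rintro rfl
    rw [zero_smul, Submodule.Quotient.mk_eq_zero] at hDdb
    exact hdb hDdb
  have hDbd0 : Dbd ≠ 0 := by
    rintro rfl
    rw [zero_smul, Submodule.Quotient.mk_eq_zero] at hDbd
    exact hbd' hDbd
  have e1 : Dab = y * Ddb := by
    apply coef b1 b2 _ _ hb2
    rw [← hDab, ← hxy, Submodule.Quotient.mk_add, Submodule.Quotient.mk_smul,
      Submodule.Quotient.mk_smul, mkb0, hDdb, smul_zero, zero_add, smul_smul]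
  have e2 : Dad = x * Dbd := by
    apply coef d1 d2 _ _ hd2
    rw [← hDad, ← hxy, Submodule.Quotient.mk_add, Submodule.Quotient.mk_smul,
      Submodule.Quotient.mk_smul, mkd0, hDbd, smul_zero, add_zero, smul_smul]
  have e3 : Dac = x * Dbc + y * Ddc := by
    apply coef c1 c2 _ _ hc2
    rw [← hDac, ← hxy, Submodule.Quotient.mk_add, Submodule.Quotient.mk_smul,
      Submodule.Quotient.mk_smul, hDbc, hDdc, smul_smul, smul_smul, add_smul]
  have hy : y = Dab * Ddb⁻¹ := by rw [e1, mul_assoc, mul_inv_cancel₀ hDdb0, mul_one]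
  have hx : x = Dad * Dbd⁻¹ := by rw [e2, mul_assoc, mul_inv_cancel₀ hDbd0, mul_one]
  rw [e3, hx, hy, add_comm]
end

section
/- Let R be a skew field and x, y, z, w units of R such that 1 + zwxy is a unit (equivalently, each of 1+wxyz, 1+xyzw, 1+yzwx is a unit, these elements being pairwise conjugate). Define x̄ := (1 + (zwxy)^{-1})·z, ȳ := (1 + wxyz)^{-1}·w, z̄ := (1 + (xyzw)^{-1})·x, w̄ := (1 + yzwx)^{-1}·y. Then x̄·ȳ·z̄·w̄ = (zwxy)^{-1}. -/
private lemma swap_inv {R : Type*} [DivisionRing R] {a b u : R}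
    (ha : a ≠ 0) (hb : b ≠ 0) (h : b * u = u * a) : u * a⁻¹ = b⁻¹ * u := by
  calc u * a⁻¹ = b⁻¹ * (b * u) * a⁻¹ := by
        rw [← mul_assoc, inv_mul_cancel₀ hb, one_mul]
    _ = b⁻¹ * (u * a) * a⁻¹ := by rw [h]
    _ = b⁻¹ * u := by rw [mul_assoc, mul_assoc, mul_inv_cancel₀ ha, mul_one]

/-- For units `x, y, z, w` of a skew field `R` with `1 + zwxy` a unit, the flipped
coordinates `x̄ = (1+(zwxy)⁻¹)z`, `ȳ = (1+wxyz)⁻¹w`, `z̄ = (1+(xyzw)⁻¹)x`,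
`w̄ = (1+yzwx)⁻¹y` satisfy `x̄·ȳ·z̄·w̄ = (zwxy)⁻¹`. -/
theorem flipped_monodromy_product
    {R : Type*} [DivisionRing R]
    (x y z w : R) (hx : IsUnit x) (hy : IsUnit y) (hz : IsUnit z) (hw : IsUnit w)
    (h : IsUnit (1 + z * w * x * y)) :
    ((1 + (z * w * x * y)⁻¹) * z) * ((1 + w * x * y * z)⁻¹ * w) *
      ((1 + (x * y * z * w)⁻¹) * x) * ((1 + y * z * w * x)⁻¹ * y) =
    (z * w * x * y)⁻¹ := by
  have hx0 := hx.ne_zero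
  have hy0 := hy.ne_zero
  have hz0 := hz.ne_zero
  have hw0 := hw.ne_zero
  have h0 : (1 : R) + z * w * x * y ≠ 0 := h.ne_zero
  have ha : z * w * x * y ≠ 0 := by
    exact mul_ne_zero (mul_ne_zero (mul_ne_zero hz0 hw0) hx0) hy0
  have hb : x * y * z * w ≠ 0 := by
    exact mul_ne_zero (mul_ne_zero (mul_ne_zero hx0 hy0) hz0) hw0
  -- conjugation identities
  have e1 : (1 + z * w * x * y) * z = z * (1 + w * x * y * z) := by noncomm_ring
  have e2 : (1 + w * x * y * z) * w = w * (1 + x * y * z * w) := by noncomm_ring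
  have e3 : (1 + x * y * z * w) * x = x * (1 + y * z * w * x) := by noncomm_ring
  have h1 : (1 : R) + w * x * y * z ≠ 0 := by
    intro hc
    have : (1 + z * w * x * y) * z = 0 := by rw [e1, hc, mul_zero]
    exact mul_ne_zero h0 hz0 this
  have h2 : (1 : R) + x * y * z * w ≠ 0 := by
    intro hc
    have : (1 + w * x * y * z) * w = 0 := by rw [e2, hc, mul_zero]
    exact mul_ne_zero h1 hw0 this
  have h3 : (1 : R) + y * z * w * x ≠ 0 := by
    intro hc
    have : (1 + x * y * z * w) * x = 0 := by rw [e3, hc, mul_zero]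
    exact mul_ne_zero h2 hx0 this
  have k1 : z * (1 + w * x * y * z)⁻¹ = (1 + z * w * x * y)⁻¹ * z :=
    swap_inv h1 h0 e1
  have k3 : x * (1 + y * z * w * x)⁻¹ = (1 + x * y * z * w)⁻¹ * x :=
    swap_inv h3 h2 e3
  have i1 : (1 + (z * w * x * y)⁻¹) = (z * w * x * y)⁻¹ * (1 + z * w * x * y) := by
    rw [mul_add, mul_one, inv_mul_cancel₀ ha, add_comm]
  have i2 : (1 + (x * y * z * w)⁻¹) = (x * y * z * w)⁻¹ * (1 + x * y * z * w) := by
    rw [mul_add, mul_one, inv_mul_cancel₀ hb, add_comm]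
  rw [i1, i2]
  calc (z * w * x * y)⁻¹ * (1 + z * w * x * y) * z * ((1 + w * x * y * z)⁻¹ * w) *
      ((x * y * z * w)⁻¹ * (1 + x * y * z * w) * x) * ((1 + y * z * w * x)⁻¹ * y)
      = (z * w * x * y)⁻¹ * ((1 + z * w * x * y) * (z * (1 + w * x * y * z)⁻¹)) * w *
        ((x * y * z * w)⁻¹ * ((1 + x * y * z * w) * (x * (1 + y * z * w * x)⁻¹))) * y := by
        simp only [mul_assoc]
    _ = (z * w * x * y)⁻¹ * ((1 + z * w * x * y) * ((1 + z * w * x * y)⁻¹ * z)) * w *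
        ((x * y * z * w)⁻¹ * ((1 + x * y * z * w) * ((1 + x * y * z * w)⁻¹ * x))) * y := by
        rw [k1, k3]
    _ = (z * w * x * y)⁻¹ * z * w * ((x * y * z * w)⁻¹ * x) * y := by
        rw [← mul_assoc (1 + z * w * x * y), mul_inv_cancel₀ h0, one_mul,
          ← mul_assoc (1 + x * y * z * w), mul_inv_cancel₀ h2, one_mul]
    _ = (z * w * x * y)⁻¹ := by
        rw [mul_inv_rev, mul_inv_rev, mul_inv_rev]
        simp only [mul_assoc]
        rw [inv_mul_cancel_left₀ hz0, inv_mul_cancel_left₀ hw0,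
          mul_inv_rev, mul_inv_rev, mul_inv_rev]
        simp only [mul_assoc]
        rw [inv_mul_cancel_left₀ hx0, inv_mul_cancel₀ hy0, mul_one]
end

section
/- Let R be a skew field and a1, a2, a3, a4 units of R. For i ∈ Z/4Z set A_i := a_i·a_{i+1}·a_{i+2}·a_{i+3} (indices mod 4), and assume 1 + A_1 is a unit (equivalently each 1 + A_i is a unit, these elements being pairwise conjugate since a_i·A_{i+1} = A_i·a_i). Define b_1 := (1 + A_3^{-1})·a_3, b_2 := (1 + A_4)^{-1}·a_4, b_3 := (1 + A_1^{-1})·a_1, b_4 := (1 + A_2)^{-1}·a_2, and B_i := b_i·b_{i+1}·b_{i+2}·b_{i+3}. Then each 1 + B_i is a unit and the a-coordinates are recovered by the inverse transformation of the same shape: a_1 = b_3·(1 + B_4)^{-1}, a_2 = b_4·(1 + B_1^{-1}), a_3 = b_1·(1 + B_2)^{-1}, a_4 = b_2·(1 + B_3^{-1}); that is, the square of the two-by-two move on A-coordinates is the identity. -/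
private lemma swap_inv_s12 {R : Type*} [DivisionRing R] {x y z : R}
    (hy : y ≠ 0) (hz : z ≠ 0) (h : x * y = z * x) : x * y⁻¹ = z⁻¹ * x := by
  have h2 : z⁻¹ * (x * y) * y⁻¹ = z⁻¹ * (z * x) * y⁻¹ := by rw [h]
  rw [mul_assoc, mul_assoc, mul_inv_cancel₀ hy, mul_one,
    inv_mul_cancel_left₀ hz] at h2
  rw [h2]

private lemma one_add_inv {R : Type*} [DivisionRing R] {A : R} (hA : A ≠ 0) :
    1 + A⁻¹ = A⁻¹ * (1 + A) := by
  rw [mul_add, mul_one, inv_mul_cancel₀ hA, add_comm]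

private lemma one_add_inv' {R : Type*} [DivisionRing R] {A : R} (hA : A ≠ 0) :
    1 + A⁻¹ = (1 + A) * A⁻¹ := by
  rw [add_mul, one_mul, mul_inv_cancel₀ hA, add_comm]


/-- The square of the two-by-two move on `A`-coordinates is the identity: for units
`a1, ..., a4` of a skew field with `1 + A_1` a unit (`A_i := a_i a_{i+1} a_{i+2} a_{i+3}`,
indices mod 4), defining `b_1 = (1+A_3⁻¹)a_3`, `b_2 = (1+A_4)⁻¹a_4`, `b_3 = (1+A_1⁻¹)a_1`,
`b_4 = (1+A_2)⁻¹a_2` and `B_i := b_i b_{i+1} b_{i+2} b_{i+3}`, each `1 + B_i` is a unit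
and `a_1 = b_3(1+B_4)⁻¹`, `a_2 = b_4(1+B_1⁻¹)`, `a_3 = b_1(1+B_2)⁻¹`, `a_4 = b_2(1+B_3⁻¹)`. -/
theorem two_by_two_move_is_involution_on_A_coordinates
    {R : Type*} [DivisionRing R]
    (a1 a2 a3 a4 : R)
    (ha1 : IsUnit a1) (ha2 : IsUnit a2) (ha3 : IsUnit a3) (ha4 : IsUnit a4)
    (A1 A2 A3 A4 : R)
    (hA1 : A1 = a1 * a2 * a3 * a4) (hA2 : A2 = a2 * a3 * a4 * a1)
    (hA3 : A3 = a3 * a4 * a1 * a2) (hA4 : A4 = a4 * a1 * a2 * a3)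
    (hu : IsUnit (1 + A1))
    (b1 b2 b3 b4 : R)
    (hb1 : b1 = (1 + A3⁻¹) * a3) (hb2 : b2 = (1 + A4)⁻¹ * a4)
    (hb3 : b3 = (1 + A1⁻¹) * a1) (hb4 : b4 = (1 + A2)⁻¹ * a2)
    (B1 B2 B3 B4 : R)
    (hB1 : B1 = b1 * b2 * b3 * b4) (hB2 : B2 = b2 * b3 * b4 * b1)
    (hB3 : B3 = b3 * b4 * b1 * b2) (hB4 : B4 = b4 * b1 * b2 * b3) :
    IsUnit (1 + B1) ∧ IsUnit (1 + B2) ∧ IsUnit (1 + B3) ∧ IsUnit (1 + B4) ∧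
    a1 = b3 * (1 + B4)⁻¹ ∧ a2 = b4 * (1 + B1⁻¹) ∧
    a3 = b1 * (1 + B2)⁻¹ ∧ a4 = b2 * (1 + B3⁻¹) := by
  have na1 : a1 ≠ 0 := ha1.ne_zero
  have na2 : a2 ≠ 0 := ha2.ne_zero
  have na3 : a3 ≠ 0 := ha3.ne_zero
  have na4 : a4 ≠ 0 := ha4.ne_zero
  have nA1 : A1 ≠ 0 := by
    rw [hA1]; exact mul_ne_zero (mul_ne_zero (mul_ne_zero na1 na2) na3) na4
  have nA2 : A2 ≠ 0 := by
    rw [hA2]; exact mul_ne_zero (mul_ne_zero (mul_ne_zero na2 na3) na4) na1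
  have nA3 : A3 ≠ 0 := by
    rw [hA3]; exact mul_ne_zero (mul_ne_zero (mul_ne_zero na3 na4) na1) na2
  have nA4 : A4 ≠ 0 := by
    rw [hA4]; exact mul_ne_zero (mul_ne_zero (mul_ne_zero na4 na1) na2) na3
  have c12 : a1 * A2 = A1 * a1 := by rw [hA1, hA2]; noncomm_ring
  have c23 : a2 * A3 = A2 * a2 := by rw [hA2, hA3]; noncomm_ring
  have c34 : a3 * A4 = A3 * a3 := by rw [hA3, hA4]; noncomm_ring
  have c41 : a4 * A1 = A4 * a4 := by rw [hA4, hA1]; noncomm_ring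
  have h1 : (1 : R) + A1 ≠ 0 := hu.ne_zero
  have e12 : a1 * (1 + A2) = (1 + A1) * a1 := by
    rw [mul_add, add_mul, mul_one, one_mul, c12]
  have h2 : (1 : R) + A2 ≠ 0 := by
    intro h; exact mul_ne_zero h1 na1 (by rw [← e12, h, mul_zero])
  have e23 : a2 * (1 + A3) = (1 + A2) * a2 := by
    rw [mul_add, add_mul, mul_one, one_mul, c23]
  have h3 : (1 : R) + A3 ≠ 0 := by
    intro h; exact mul_ne_zero h2 na2 (by rw [← e23, h, mul_zero])
  have e34 : a3 * (1 + A4) = (1 + A3) * a3 := by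
    rw [mul_add, add_mul, mul_one, one_mul, c34]
  have h4 : (1 : R) + A4 ≠ 0 := by
    intro h; exact mul_ne_zero h3 na3 (by rw [← e34, h, mul_zero])
  have e41 : a4 * (1 + A1) = (1 + A4) * a4 := by
    rw [mul_add, add_mul, mul_one, one_mul, c41]
  have i1 : (1 : R) + A1⁻¹ ≠ 0 := by
    rw [one_add_inv nA1]; exact mul_ne_zero (inv_ne_zero nA1) h1
  have i2 : (1 : R) + A2⁻¹ ≠ 0 := by
    rw [one_add_inv nA2]; exact mul_ne_zero (inv_ne_zero nA2) h2
  have i3 : (1 : R) + A3⁻¹ ≠ 0 := by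
    rw [one_add_inv nA3]; exact mul_ne_zero (inv_ne_zero nA3) h3
  have i4 : (1 : R) + A4⁻¹ ≠ 0 := by
    rw [one_add_inv nA4]; exact mul_ne_zero (inv_ne_zero nA4) h4
  have s12 : a1 * (1 + A2)⁻¹ = (1 + A1)⁻¹ * a1 := swap_inv_s12 h2 h1 e12
  have s34 : a3 * (1 + A4)⁻¹ = (1 + A3)⁻¹ * a3 := swap_inv_s12 h4 h3 e34
  have ci12 : a1 * A2⁻¹ = A1⁻¹ * a1 := swap_inv_s12 nA2 nA1 c12
  have ci34 : a3 * A4⁻¹ = A3⁻¹ * a3 := swap_inv_s12 nA4 nA3 c34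
  have ei12 : a1 * (1 + A2⁻¹) = (1 + A1⁻¹) * a1 := by
    rw [mul_add, add_mul, mul_one, one_mul, ci12]
  have ei34 : a3 * (1 + A4⁻¹) = (1 + A3⁻¹) * a3 := by
    rw [mul_add, add_mul, mul_one, one_mul, ci34]
  have si12 : a1 * (1 + A2⁻¹)⁻¹ = (1 + A1⁻¹)⁻¹ * a1 := swap_inv_s12 i2 i1 ei12
  have si34 : a3 * (1 + A4⁻¹)⁻¹ = (1 + A3⁻¹)⁻¹ * a3 := swap_inv_s12 i4 i3 ei34
  -- products of consecutive b's
  have hb12 : b1 * b2 = A3⁻¹ * (a3 * a4) := by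
    calc b1 * b2 = (1 + A3⁻¹) * (a3 * (1 + A4)⁻¹) * a4 := by
          rw [hb1, hb2]; noncomm_ring
      _ = (A3⁻¹ * (1 + A3)) * ((1 + A3)⁻¹ * a3) * a4 := by
          rw [s34, ← one_add_inv nA3]
      _ = A3⁻¹ * (a3 * a4) := by
          simp [mul_assoc, mul_inv_cancel_left₀ h3]
  have hb34 : b3 * b4 = A1⁻¹ * (a1 * a2) := by
    calc b3 * b4 = (1 + A1⁻¹) * (a1 * (1 + A2)⁻¹) * a2 := by
          rw [hb3, hb4]; noncomm_ring
      _ = (A1⁻¹ * (1 + A1)) * ((1 + A1)⁻¹ * a1) * a2 := by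
          rw [s12, ← one_add_inv nA1]
      _ = A1⁻¹ * (a1 * a2) := by
          simp [mul_assoc, mul_inv_cancel_left₀ h1]
  -- B1 = A3⁻¹ and B3 = A1⁻¹
  have hA1inv : A1⁻¹ = (a3 * a4)⁻¹ * (a1 * a2)⁻¹ := by
    rw [show A1 = (a1 * a2) * (a3 * a4) by rw [hA1]; noncomm_ring, mul_inv_rev]
  have hA3inv : A3⁻¹ = (a1 * a2)⁻¹ * (a3 * a4)⁻¹ := by
    rw [show A3 = (a3 * a4) * (a1 * a2) by rw [hA3]; noncomm_ring, mul_inv_rev]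
  have hB1A : B1 = A3⁻¹ := by
    calc B1 = (A3⁻¹ * (a3 * a4)) * (A1⁻¹ * (a1 * a2)) := by
          rw [hB1, show b1 * b2 * b3 * b4 = (b1 * b2) * (b3 * b4) by noncomm_ring,
            hb12, hb34]
      _ = A3⁻¹ := by
          rw [hA1inv, inv_mul_cancel_right₀ (mul_ne_zero na1 na2),
            mul_inv_cancel_right₀ (mul_ne_zero na3 na4)]
  have hB3A : B3 = A1⁻¹ := by
    calc B3 = (A1⁻¹ * (a1 * a2)) * (A3⁻¹ * (a3 * a4)) := by
          rw [hB3, show b3 * b4 * b1 * b2 = (b3 * b4) * (b1 * b2) by noncomm_ring,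
            hb12, hb34]
      _ = A1⁻¹ := by
          rw [hA3inv, inv_mul_cancel_right₀ (mul_ne_zero na3 na4),
            mul_inv_cancel_right₀ (mul_ne_zero na1 na2)]
  -- B2 = A4⁻¹
  have t2 : a4 * A1⁻¹ = a3⁻¹ * (a1 * a2)⁻¹ := by
    rw [hA1]; simp [mul_inv_rev, mul_assoc, na1, na2, na3, na4]
  have hB2A : B2 = A4⁻¹ := by
    have t1 : b2 * (b3 * b4) = (1 + A4)⁻¹ * a3⁻¹ := by
      rw [hb2, hb34]
      rw [show (1 + A4)⁻¹ * a4 * (A1⁻¹ * (a1 * a2)) =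
        (1 + A4)⁻¹ * ((a4 * A1⁻¹) * (a1 * a2)) by noncomm_ring, t2,
        mul_assoc a3⁻¹, inv_mul_cancel₀ (mul_ne_zero na1 na2), mul_one]
    have t3 : a3⁻¹ * ((1 + A3⁻¹) * a3) = 1 + A4⁻¹ := by
      rw [← ei34, inv_mul_cancel_left₀ na3]
    calc B2 = ((1 + A4)⁻¹ * a3⁻¹) * ((1 + A3⁻¹) * a3) := by
          rw [hB2, show b2 * b3 * b4 * b1 = (b2 * (b3 * b4)) * b1 by noncomm_ring,
            t1, hb1]
      _ = (1 + A4)⁻¹ * (1 + A4⁻¹) := by rw [mul_assoc, t3]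
      _ = A4⁻¹ := by rw [one_add_inv' nA4, inv_mul_cancel_left₀ h4]
  -- B4 = A2⁻¹
  have t2' : a2 * A3⁻¹ = a1⁻¹ * (a3 * a4)⁻¹ := by
    rw [hA3]; simp [mul_inv_rev, mul_assoc, na1, na2, na3, na4]
  have hB4A : B4 = A2⁻¹ := by
    have t1 : b4 * (b1 * b2) = (1 + A2)⁻¹ * a1⁻¹ := by
      rw [hb4, hb12]
      rw [show (1 + A2)⁻¹ * a2 * (A3⁻¹ * (a3 * a4)) =
        (1 + A2)⁻¹ * ((a2 * A3⁻¹) * (a3 * a4)) by noncomm_ring, t2',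
        mul_assoc a1⁻¹, inv_mul_cancel₀ (mul_ne_zero na3 na4), mul_one]
    have t3 : a1⁻¹ * ((1 + A1⁻¹) * a1) = 1 + A2⁻¹ := by
      rw [← ei12, inv_mul_cancel_left₀ na1]
    calc B4 = ((1 + A2)⁻¹ * a1⁻¹) * ((1 + A1⁻¹) * a1) := by
          rw [hB4, show b4 * b1 * b2 * b3 = (b4 * (b1 * b2)) * b3 by noncomm_ring,
            t1, hb3]
      _ = (1 + A2)⁻¹ * (1 + A2⁻¹) := by rw [mul_assoc, t3]
      _ = A2⁻¹ := by rw [one_add_inv' nA2, inv_mul_cancel_left₀ h2]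
  refine ⟨?_, ?_, ?_, ?_, ?_, ?_, ?_, ?_⟩
  · rw [isUnit_iff_ne_zero, hB1A]; exact i3
  · rw [isUnit_iff_ne_zero, hB2A]; exact i4
  · rw [isUnit_iff_ne_zero, hB3A]; exact i1
  · rw [isUnit_iff_ne_zero, hB4A]; exact i2
  · rw [hb3, hB4A, mul_assoc, si12, ← mul_assoc, mul_inv_cancel₀ i1, one_mul]
  · rw [hb4, hB1A, inv_inv, mul_assoc, e23, ← mul_assoc, inv_mul_cancel₀ h2,
      one_mul]
  · rw [hb1, hB2A, mul_assoc, si34, ← mul_assoc, mul_inv_cancel₀ i3, one_mul]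
  · rw [hb2, hB3A, inv_inv, mul_assoc, e41, ← mul_assoc, inv_mul_cancel₀ h4,
      one_mul]
end

section
/- Let R be a skew field and a1, a2, a3, a4 units of R. For i ∈ Z/4Z set A_i := a_i·a_{i+1}·a_{i+2}·a_{i+3} (indices mod 4), assume 1 + A_1 is a unit, and define b_1 := (1 + A_3^{-1})·a_3, b_2 := (1 + A_4)^{-1}·a_4, b_3 := (1 + A_1^{-1})·a_1, b_4 := (1 + A_2)^{-1}·a_2, and B_i := b_i·b_{i+1}·b_{i+2}·b_{i+3}. Then for every i ∈ Z/4Z one has b_i·b_{i+1} = (a_i·a_{i+1})^{-1} and A_i = B_{i+2}^{-1}. -/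
private lemma tbt_swap {R : Type*} [DivisionRing R] (X Y a b : R) (hX : X ≠ 0) (hY : Y ≠ 0)
    (h : X * a = b * Y) : a * Y⁻¹ = X⁻¹ * b := by
  have := congrArg (fun z => X⁻¹ * z * Y⁻¹) h
  simpa [mul_assoc, inv_mul_cancel_left₀ hX, mul_inv_cancel_right₀ hY] using this

/-- Under the two-by-two move on `A`-coordinates (`b_1 = (1+A_3⁻¹)a_3`,
`b_2 = (1+A_4)⁻¹a_4`, `b_3 = (1+A_1⁻¹)a_1`, `b_4 = (1+A_2)⁻¹a_2`, where
`A_i := a_i a_{i+1} a_{i+2} a_{i+3}` with indices mod 4 and `1 + A_1` is a unit),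
one has `b_i b_{i+1} = (a_i a_{i+1})⁻¹` and `A_i = B_{i+2}⁻¹` for all `i ∈ ℤ/4ℤ`,
where `B_i := b_i b_{i+1} b_{i+2} b_{i+3}`. -/
theorem two_by_two_move_monomial_relations
    {R : Type*} [DivisionRing R]
    (a1 a2 a3 a4 : R)
    (ha1 : IsUnit a1) (ha2 : IsUnit a2) (ha3 : IsUnit a3) (ha4 : IsUnit a4)
    (A1 A2 A3 A4 : R)
    (hA1 : A1 = a1 * a2 * a3 * a4) (hA2 : A2 = a2 * a3 * a4 * a1)
    (hA3 : A3 = a3 * a4 * a1 * a2) (hA4 : A4 = a4 * a1 * a2 * a3)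
    (hu : IsUnit (1 + A1))
    (b1 b2 b3 b4 : R)
    (hb1 : b1 = (1 + A3⁻¹) * a3) (hb2 : b2 = (1 + A4)⁻¹ * a4)
    (hb3 : b3 = (1 + A1⁻¹) * a1) (hb4 : b4 = (1 + A2)⁻¹ * a2)
    (B1 B2 B3 B4 : R)
    (hB1 : B1 = b1 * b2 * b3 * b4) (hB2 : B2 = b2 * b3 * b4 * b1)
    (hB3 : B3 = b3 * b4 * b1 * b2) (hB4 : B4 = b4 * b1 * b2 * b3) :
    b1 * b2 = (a1 * a2)⁻¹ ∧ b2 * b3 = (a2 * a3)⁻¹ ∧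
    b3 * b4 = (a3 * a4)⁻¹ ∧ b4 * b1 = (a4 * a1)⁻¹ ∧
    A1 = B3⁻¹ ∧ A2 = B4⁻¹ ∧ A3 = B1⁻¹ ∧ A4 = B2⁻¹ := by
  rw [isUnit_iff_ne_zero] at ha1 ha2 ha3 ha4 hu
  have hA1n : A1 ≠ 0 := by rw [hA1]; exact mul_ne_zero (mul_ne_zero (mul_ne_zero ha1 ha2) ha3) ha4
  have hA2n : A2 ≠ 0 := by rw [hA2]; exact mul_ne_zero (mul_ne_zero (mul_ne_zero ha2 ha3) ha4) ha1
  have hA3n : A3 ≠ 0 := by rw [hA3]; exact mul_ne_zero (mul_ne_zero (mul_ne_zero ha3 ha4) ha1) ha2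
  have hA4n : A4 ≠ 0 := by rw [hA4]; exact mul_ne_zero (mul_ne_zero (mul_ne_zero ha4 ha1) ha2) ha3
  -- conjugation relations
  have e2 : 1 + A2 = a1⁻¹ * (1 + A1) * a1 := by
    rw [hA1, hA2]
    simp [mul_add, add_mul, mul_assoc, inv_mul_cancel_left₀ ha1, inv_mul_cancel₀ ha1]
  have e3 : 1 + A3 = a2⁻¹ * (1 + A2) * a2 := by
    rw [hA2, hA3]
    simp [mul_add, add_mul, mul_assoc, inv_mul_cancel_left₀ ha2, inv_mul_cancel₀ ha2]
  have e4 : 1 + A4 = a3⁻¹ * (1 + A3) * a3 := by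
    rw [hA3, hA4]
    simp [mul_add, add_mul, mul_assoc, inv_mul_cancel_left₀ ha3, inv_mul_cancel₀ ha3]
  have hu2 : (1 : R) + A2 ≠ 0 := by
    rw [e2]; exact mul_ne_zero (mul_ne_zero (inv_ne_zero ha1) hu) ha1
  have hu3 : (1 : R) + A3 ≠ 0 := by
    rw [e3]; exact mul_ne_zero (mul_ne_zero (inv_ne_zero ha2) hu2) ha2
  have hu4 : (1 : R) + A4 ≠ 0 := by
    rw [e4]; exact mul_ne_zero (mul_ne_zero (inv_ne_zero ha3) hu3) ha3
  -- 1 + A⁻¹ = A⁻¹(1+A)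
  have k1 : (1 : R) + A1⁻¹ = A1⁻¹ * (1 + A1) := by
    rw [mul_add, mul_one, inv_mul_cancel₀ hA1n, add_comm]
  have k3 : (1 : R) + A3⁻¹ = A3⁻¹ * (1 + A3) := by
    rw [mul_add, mul_one, inv_mul_cancel₀ hA3n, add_comm]
  -- swaps
  have s34 : a3 * (1 + A4)⁻¹ = (1 + A3)⁻¹ * a3 := by
    refine tbt_swap _ _ _ _ hu3 hu4 ?_
    rw [hA3, hA4]; simp [mul_add, add_mul, mul_assoc]
  have s12 : a1 * (1 + A2)⁻¹ = (1 + A1)⁻¹ * a1 := by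
    refine tbt_swap _ _ _ _ hu hu2 ?_
    rw [hA1, hA2]; simp [mul_add, add_mul, mul_assoc]
  -- the four products
  have P12 : b1 * b2 = (a1 * a2)⁻¹ := by
    rw [hb1, hb2, k3, mul_assoc (A3⁻¹ * (1 + A3)), ← mul_assoc a3, s34, mul_assoc A3⁻¹,
      mul_assoc ((1 : R) + A3)⁻¹, mul_inv_cancel_left₀ hu3, hA3]
    simp [mul_inv_rev, mul_assoc, inv_mul_cancel_left₀, ha3, ha4]
  have P34 : b3 * b4 = (a3 * a4)⁻¹ := by
    rw [hb3, hb4, k1, mul_assoc (A1⁻¹ * (1 + A1)), ← mul_assoc a1, s12, mul_assoc A1⁻¹,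
      mul_assoc ((1 : R) + A1)⁻¹, mul_inv_cancel_left₀ hu, hA1]
    simp [mul_inv_rev, mul_assoc, inv_mul_cancel_left₀, ha1, ha2]
  have P23 : b2 * b3 = (a2 * a3)⁻¹ := by
    have t : a4 * ((1 + A1⁻¹) * a1) = (1 + A4) * (a2 * a3)⁻¹ := by
      rw [hA1, hA4]
      simp [mul_add, add_mul, mul_inv_rev, mul_assoc, inv_mul_cancel_left₀, mul_inv_cancel_left₀,
        ha1, ha2, ha3, ha4, inv_mul_cancel₀, mul_inv_cancel₀, add_comm]
    rw [hb2, hb3, mul_assoc, t, inv_mul_cancel_left₀ hu4]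
  have P41 : b4 * b1 = (a4 * a1)⁻¹ := by
    have t : a2 * ((1 + A3⁻¹) * a3) = (1 + A2) * (a4 * a1)⁻¹ := by
      rw [hA3, hA2]
      simp [mul_add, add_mul, mul_inv_rev, mul_assoc, inv_mul_cancel_left₀, mul_inv_cancel_left₀,
        ha1, ha2, ha3, ha4, inv_mul_cancel₀, mul_inv_cancel₀, add_comm]
    rw [hb4, hb1, mul_assoc, t, inv_mul_cancel_left₀ hu2]
  refine ⟨P12, P23, P34, P41, ?_, ?_, ?_, ?_⟩
  · rw [hB3, mul_assoc (b3*b4) b1 b2, P34, P12, hA1]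
    simp [mul_inv_rev, inv_inv, mul_assoc]
  · rw [hB4, mul_assoc (b4*b1) b2 b3, P41, P23, hA2]
    simp [mul_inv_rev, inv_inv, mul_assoc]
  · rw [hB1, mul_assoc (b1*b2) b3 b4, P12, P34, hA3]
    simp [mul_inv_rev, inv_inv, mul_assoc]
  · rw [hB2, mul_assoc (b2*b3) b4 b1, P23, P41, hA4]
    simp [mul_inv_rev, inv_inv, mul_assoc]
end

section
/- Let R be a skew field and t_{ba}, t_{cb}, t_{dc}, t_{ad} units of R (the parallel transports of a flat R-line bundle along the arcs of the square graph α with ∘-vertices a, b, c, d). Define M_a := -(t_{ad}·t_{dc}·t_{cb}·t_{ba}), M_b := -(t_{ba}·t_{ad}·t_{dc}·t_{cb}), M_c := -(t_{cb}·t_{ba}·t_{ad}·t_{dc}), M_d := -(t_{dc}·t_{cb}·t_{ba}·t_{ad}) (minus the counterclockwise monodromies at the four vertices). Assume 1 + M_b is a unit (equivalently each 1 + M_v is a unit, these being pairwise conjugate). Define the transformed transports t'_{ba} := (1 + M_b)·t_{ba}, t'_{cb} := t_{cb}·(1 + M_b)^{-1}, t'_{dc} := (1 + M_d)·t_{dc},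 t'_{ad} := t_{ad}·(1 + M_d)^{-1}, and let M'_a, M'_b, M'_c, M'_d be defined from the primed transports by the same formulas. Then M'_a = M_a, M'_b = M_b, M'_c = M_c, and M'_d = M_d. -/
/-- The two-by-two move on the parallel transports of a flat `R`-line bundle on the
square graph preserves the (minus) monodromies at the four `∘`-vertices:
`M'_a = M_a`, `M'_b = M_b`, `M'_c = M_c`, `M'_d = M_d`. -/
theorem two_by_two_move_preserves_monodromies
    {R : Type*} [DivisionRing R]
    (tba tcb tdc tad : R)
    (h1 : IsUnit tba) (h2 : IsUnit tcb) (h3 : IsUnit tdc) (h4 : IsUnit tad)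
    (Ma Mb Mc Md : R)
    (hMa : Ma = -(tad * tdc * tcb * tba)) (hMb : Mb = -(tba * tad * tdc * tcb))
    (hMc : Mc = -(tcb * tba * tad * tdc)) (hMd : Md = -(tdc * tcb * tba * tad))
    (hu : IsUnit (1 + Mb))
    (tba' tcb' tdc' tad' : R)
    (hba' : tba' = (1 + Mb) * tba) (hcb' : tcb' = tcb * (1 + Mb)⁻¹)
    (hdc' : tdc' = (1 + Md) * tdc) (had' : tad' = tad * (1 + Md)⁻¹)
    (Ma' Mb' Mc' Md' : R)
    (hMa' : Ma' = -(tad' * tdc' * tcb' * tba')) (hMb' : Mb' = -(tba' * tad' * tdc' * tcb'))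
    (hMc' : Mc' = -(tcb' * tba' * tad' * tdc')) (hMd' : Md' = -(tdc' * tcb' * tba' * tad')) :
    Ma' = Ma ∧ Mb' = Mb ∧ Mc' = Mc ∧ Md' = Md := by
  have hb : (1 + Mb) ≠ 0 := hu.ne_zero
  have hu0 : (tdc * tcb) ≠ 0 := mul_ne_zero h3.ne_zero h2.ne_zero
  -- `1 + Md` is conjugate to `1 + Mb` via `tdc * tcb`, hence nonzero.
  have hconj : (1 + Md) * (tdc * tcb) = (tdc * tcb) * (1 + Mb) := by
    rw [hMd, hMb]; noncomm_ring
  have hd : (1 + Md) ≠ 0 := by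
    intro h
    rw [h, zero_mul] at hconj
    rcases mul_eq_zero.mp hconj.symm with h' | h'
    · exact hu0 h'
    · exact hb h'
  refine ⟨?_, ?_, ?_, ?_⟩
  · -- Ma' = Ma
    rw [hMa', had', hdc', hcb', hba', hMa]
    simp only [mul_assoc, inv_mul_cancel_left₀ hd, inv_mul_cancel_left₀ hb]
  · -- Mb' = Mb
    rw [hMb', hba', had', hdc', hcb']
    simp only [mul_assoc, inv_mul_cancel_left₀ hd]
    have key : tba * (tad * (tdc * (tcb * (1 + Mb)⁻¹))) = -Mb * (1 + Mb)⁻¹ := by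
      rw [hMb, neg_neg]; simp only [mul_assoc]
    rw [key]
    have e1 : (1 + Mb) * (-Mb * (1 + Mb)⁻¹) = -(Mb * (1 + Mb) * (1 + Mb)⁻¹) := by
      noncomm_ring
    rw [e1, neg_neg, mul_assoc, mul_inv_cancel₀ hb, mul_one]
  · -- Mc' = Mc
    rw [hMc', hcb', hba', had', hdc', hMc]
    simp only [mul_assoc, inv_mul_cancel_left₀ hd, inv_mul_cancel_left₀ hb]
  · -- Md' = Md
    rw [hMd', hdc', hcb', hba', had']
    simp only [mul_assoc, inv_mul_cancel_left₀ hb]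
    have key : tdc * (tcb * (tba * (tad * (1 + Md)⁻¹))) = -Md * (1 + Md)⁻¹ := by
      rw [hMd, neg_neg]; simp only [mul_assoc]
    rw [key]
    have e1 : (1 + Md) * (-Md * (1 + Md)⁻¹) = -(Md * (1 + Md) * (1 + Md)⁻¹) := by
      noncomm_ring
    rw [e1, neg_neg, mul_assoc, mul_inv_cancel₀ hd, mul_one]
end

section
/- Let R be a skew field and t_{ba}, t_{cb}, t_{dc}, t_{ad} units of R, with M_a := -(t_{ad}t_{dc}t_{cb}t_{ba}), M_b := -(t_{ba}t_{ad}t_{dc}t_{cb}), M_c := -(t_{cb}t_{ba}t_{ad}t_{dc}), M_d := -(t_{dc}t_{cb}t_{ba}t_{ad}), and assume 1 + M_b is a unit. Let t'_{ba} := (1+M_b)t_{ba}, t'_{cb} := t_{cb}(1+M_b)^{-1}, t'_{dc} := (1+M_d)t_{dc}, t'_{ad} := t_{ad}(1+M_d)^{-1}, and let M'_v be defined from the primed transports as the M_v are from the unprimed ones. Then: (i) the move can equivalently be written as t_{cb} = (1+M'_c)·t'_{cb} and t_{ad} = (1+M'_a)·t'_{ad}; and (ii) the move is an involution: applying the two-by-two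 move to the primed data at the rotated square, i.e. setting t''_{cb} := (1+M'_c)t'_{cb}, t''_{dc} := t'_{dc}(1+M'_c)^{-1}, t''_{ad} := (1+M'_a)t'_{ad}, t''_{ba} := t'_{ba}(1+M'_a)^{-1}, one recovers t''_{ba} = t_{ba}, t''_{cb} = t_{cb}, t''_{dc} = t_{dc}, t''_{ad} = t_{ad}. -/
/-- The two-by-two move on the parallel transports of a flat `R`-line bundle on the
square graph: (i) it can equivalently be written as `t_cb = (1+M'_c)·t'_cb` and
`t_ad = (1+M'_a)·t'_ad`; (ii) it is an involution: applying the move to the primed data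
at the rotated square recovers the original transports. -/
theorem two_by_two_move_is_involution
    {R : Type*} [DivisionRing R]
    (tba tcb tdc tad : R)
    (h1 : IsUnit tba) (h2 : IsUnit tcb) (h3 : IsUnit tdc) (h4 : IsUnit tad)
    (Ma Mb Mc Md : R)
    (hMa : Ma = -(tad * tdc * tcb * tba)) (hMb : Mb = -(tba * tad * tdc * tcb))
    (hMc : Mc = -(tcb * tba * tad * tdc)) (hMd : Md = -(tdc * tcb * tba * tad))
    (hu : IsUnit (1 + Mb))
    (tba' tcb' tdc' tad' : R)
    (hba' : tba' = (1 + Mb) * tba) (hcb' : tcb' = tcb * (1 + Mb)⁻¹)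
    (hdc' : tdc' = (1 + Md) * tdc) (had' : tad' = tad * (1 + Md)⁻¹)
    (Ma' Mb' Mc' Md' : R)
    (hMa' : Ma' = -(tad' * tdc' * tcb' * tba')) (hMb' : Mb' = -(tba' * tad' * tdc' * tcb'))
    (hMc' : Mc' = -(tcb' * tba' * tad' * tdc')) (hMd' : Md' = -(tdc' * tcb' * tba' * tad')) :
    (tcb = (1 + Mc') * tcb' ∧ tad = (1 + Ma') * tad') ∧
    ((1 + Mc') * tcb' = tcb ∧ tdc' * (1 + Mc')⁻¹ = tdc ∧
      (1 + Ma') * tad' = tad ∧ tba' * (1 + Ma')⁻¹ = tba) := by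
  have h1' : tba ≠ 0 := h1.ne_zero
  have h2' : tcb ≠ 0 := h2.ne_zero
  have h3' : tdc ≠ 0 := h3.ne_zero
  have h4' : tad ≠ 0 := h4.ne_zero
  have hb : (1 + Mb) ≠ 0 := hu.ne_zero
  -- intertwining identities
  have e1 : tcb * (1 + Mb) = (1 + Mc) * tcb := by rw [hMb, hMc]; noncomm_ring
  have e2 : (1 + Md) * tdc = tdc * (1 + Mc) := by rw [hMd, hMc]; noncomm_ring
  have e3 : (1 + Ma) * tad = tad * (1 + Md) := by rw [hMa, hMd]; noncomm_ring
  have e4 : (1 + Mb) * tba = tba * (1 + Ma) := by rw [hMb, hMa]; noncomm_ring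
  have hc : (1 + Mc) ≠ 0 := by
    intro h
    have := e1
    rw [h, zero_mul] at this
    exact (mul_ne_zero h2' hb) this
  have hd : (1 + Md) ≠ 0 := by
    intro h
    have := e2
    rw [h, zero_mul] at this
    exact (mul_ne_zero h3' hc) this.symm
  have ha : (1 + Ma) ≠ 0 := by
    intro h
    have := e3
    rw [h, zero_mul] at this
    exact (mul_ne_zero h4' hd) this.symm
  -- the primed monodromies agree with the unprimed ones
  have key1 : tcb' * tba' = tcb * tba := by
    rw [hcb', hba', mul_assoc, ← mul_assoc (1 + Mb)⁻¹, inv_mul_cancel₀ hb, one_mul]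
  have key2 : tad' * tdc' = tad * tdc := by
    rw [had', hdc', mul_assoc, ← mul_assoc (1 + Md)⁻¹, inv_mul_cancel₀ hd, one_mul]
  have hMceq : Mc' = Mc := by
    rw [hMc', hMc, mul_assoc (tcb' * tba'), key2, key1]
    noncomm_ring
  have hMaeq : Ma' = Ma := by
    rw [hMa', hMa, mul_assoc (tad' * tdc'), key1, key2]
    noncomm_ring
  have g1 : (1 + Mc') * tcb' = tcb := by
    rw [hMceq, hcb', ← mul_assoc, ← e1, mul_assoc, mul_inv_cancel₀ hb, mul_one]
  have g2 : (1 + Ma') * tad' = tad := by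
    rw [hMaeq, had', ← mul_assoc, e3, mul_assoc, mul_inv_cancel₀ hd, mul_one]
  have g3 : tdc' * (1 + Mc')⁻¹ = tdc := by
    rw [hMceq, hdc', e2, mul_assoc, mul_inv_cancel₀ hc, mul_one]
  have g4 : tba' * (1 + Ma')⁻¹ = tba := by
    rw [hMaeq, hba', e4, mul_assoc, mul_inv_cancel₀ ha, mul_one]
  exact ⟨⟨g1.symm, g2.symm⟩, g1, g3, g2, g4⟩
end

section
/- Let R be a skew field, V a 2-dimensional R-vector space, and a, b, c, d nonzero vectors of V spanning four pairwise distinct lines Ra, Rb, Rc, Rd, with a and b linearly independent over R. Suppose X ∈ R satisfies a + b + d = 0 and d + c + X·b = 0. Suppose further that a', b', c', d' are nonzero vectors with a' = a, b' ∈ Rb, c' ∈ Rc, d' ∈ Rd, and that Y ∈ R satisfies a' + b' + c' = 0 and a' + d' + Y·c' = 0. Then X is a unit of R, Y = X^{-1}, and b' = (1 - X)·b, c' = -c, d' = (1 - X^{-1})·d. -/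
/-- Calculation of the two-by-two move for configurations of four lines in a
2-dimensional vector space over a skew field `R`: if `a + b + d = 0`, `d + c + X•b = 0`,
`a' = a`, `b' ∈ Rb`, `c' ∈ Rc`, `d' ∈ Rd` are nonzero with `a' + b' + c' = 0` and
`a' + d' + Y•c' = 0`, then `X` is a unit, `Y = X⁻¹`, `b' = (1-X)•b`, `c' = -c`, and
`d' = (1-X⁻¹)•d`. -/
theorem two_by_two_move_line_configurations
    {R V : Type*} [DivisionRing R] [AddCommGroup V] [Module R V]
    (hV : Module.finrank R V = 2)
    (a b c d : V) (ha : a ≠ 0) (hb : b ≠ 0) (hc : c ≠ 0) (hd : d ≠ 0)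
    (hab : Submodule.span R {a} ≠ Submodule.span R {b})
    (hac : Submodule.span R {a} ≠ Submodule.span R {c})
    (had : Submodule.span R {a} ≠ Submodule.span R {d})
    (hbc : Submodule.span R {b} ≠ Submodule.span R {c})
    (hbd : Submodule.span R {b} ≠ Submodule.span R {d})
    (hcd : Submodule.span R {c} ≠ Submodule.span R {d})
    (hind : LinearIndependent R ![a, b])
    (X : R) (h1 : a + b + d = 0) (h2 : d + c + X • b = 0)
    (a' b' c' d' : V)
    (ha' : a' ≠ 0) (hb' : b' ≠ 0) (hc' : c' ≠ 0) (hd' : d' ≠ 0)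
    (haa : a' = a)
    (hbb : b' ∈ Submodule.span R ({b} : Set V))
    (hcc : c' ∈ Submodule.span R ({c} : Set V))
    (hdd : d' ∈ Submodule.span R ({d} : Set V))
    (Y : R) (h3 : a' + b' + c' = 0) (h4 : a' + d' + Y • c' = 0) :
    IsUnit X ∧ Y = X⁻¹ ∧ b' = (1 - X) • b ∧ c' = -c ∧ d' = (1 - X⁻¹) • d := by
  have hpair := LinearIndependent.pair_iff.mp hind
  obtain ⟨β, hβ⟩ := Submodule.mem_span_singleton.mp hbb
  obtain ⟨γ, hγ⟩ := Submodule.mem_span_singleton.mp hcc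
  obtain ⟨δ, hδ⟩ := Submodule.mem_span_singleton.mp hdd
  have hd_eq : d = -a - b := by rw [← sub_eq_zero, ← h1]; abel
  have hc_eq : c = a + b - X • b := by
    have : c = -d - X • b := by rw [← sub_eq_zero, ← h2]; abel
    rw [this, hd_eq]; abel
  have hX0 : X ≠ 0 := by
    intro hX
    apply hcd
    have hcd' : c = (-1 : R) • d := by
      rw [hc_eq, hd_eq, hX, neg_one_smul, zero_smul, sub_zero, neg_sub]; abel
    rw [hcd', Submodule.span_singleton_smul_eq (by simp : IsUnit (-1 : R))]
  -- analyze h3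
  have h3' : a + β • b + γ • c = 0 := by rw [haa, ← hβ, ← hγ] at h3; exact h3
  have e3 : (1 + γ) • a + (β + (γ - γ * X)) • b = 0 := by
    rw [hc_eq] at h3'
    rw [← h3']
    simp only [add_smul, sub_smul, one_smul, smul_add, smul_sub, smul_smul, neg_smul]
    abel
  obtain ⟨hγ1, hβ1⟩ := hpair _ _ e3
  have hγval : γ = -1 := by rw [← sub_eq_zero, ← hγ1]; abel
  rw [hγval, neg_one_mul] at hβ1
  have hβval : β = 1 - X := by rw [← sub_eq_zero, ← hβ1]; abel
  -- analyze h4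
  have h4' : a + δ • d + (Y * γ) • c = 0 := by
    rw [haa, ← hδ, ← hγ, smul_smul] at h4; exact h4
  rw [hγval, mul_neg_one] at h4'
  have e4 : (1 - δ - Y) • a + (-δ - Y + Y * X) • b = 0 := by
    rw [hd_eq, hc_eq] at h4'
    rw [← h4']
    simp only [add_smul, sub_smul, one_smul, smul_add, smul_sub, smul_smul, neg_smul,
      smul_neg, neg_mul, mul_neg, neg_neg, one_mul]
    abel
  obtain ⟨hδ1, hY1⟩ := hpair _ _ e4
  have hδval : δ = 1 - Y := by
    rw [← sub_eq_zero, show δ - (1 - Y) = -(1 - δ - Y) by abel, hδ1, neg_zero]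
  rw [hδval] at hY1
  have hYX : Y * X = 1 := by rw [← sub_eq_zero, ← hY1]; abel
  have hXunit : IsUnit X := isUnit_iff_ne_zero.mpr hX0
  have hYval : Y = X⁻¹ := by
    calc Y = Y * (X * X⁻¹) := by rw [mul_inv_cancel₀ hX0, mul_one]
    _ = (Y * X) * X⁻¹ := by rw [mul_assoc]
    _ = X⁻¹ := by rw [hYX, one_mul]
  refine ⟨hXunit, hYval, ?_, ?_, ?_⟩
  · rw [← hβ, hβval]
  · rw [← hγ, hγval, neg_one_smul]
  · rw [← hδ, hδval, hYval]
end
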